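/- Let X and Y be forests over an alphabet 𝒳 and c a cost function over 𝒳 that is non-negative, self-equal, and conforms to the triangular inequality. For every edit script δ̄ with δ̄(X) = Y, the corresponding tree mapping M_δ̄ (obtained by the recursive construction: M_ε = {(1,1),…,(|X|,|X|)}, replacements leave M unchanged, a deletion at current index j removes the pair with second coordinate j and decrements all larger second coordinates, an insertion at current index j increments all second coordinates ≥ j) is at most as expensive as the script: c(M_δ̄, X, Y) ≤ c(δ̄, X). -/

import Mathlib

namespace TED

/-- A tree over an alphabet `α`: a label together with a (possibly empty) list of children. -/
inductive PTree (α : Type) where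
  | node : α → List (PTree α) → PTree α

/-- A forest over `α` is a finite list of trees; `[]` is the empty forest `ε`. -/
abbrev Forest (α : Type) := List (PTree α)

namespace PTree

/-- The label of (the root of) a tree. -/
def label {α : Type} : PTree α → α
  | node a _ => a

/-- The children of (the root of) a tree. -/
def children {α : Type} : PTree α → List (PTree α)
  | node _ cs => cs

mutual
  /-- The number of nodes of a tree. -/
  def size {α : Type} : PTree α → ℕ
    | node _ cs => 1 + sizeL cs
  /-- The number of nodes of a forest. -/
  def sizeL {α : Type} : List (PTree α) → ℕ
    | [] => 0
    | t :: ts => size t + sizeL ts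
end

mutual
  /-- The pre-order list of all subtrees of a tree. -/
  def subtreesT {α : Type} : PTree α → List (PTree α)
    | node a cs => node a cs :: subtreesL cs
  /-- The pre-order list of all subtrees of a forest. -/
  def subtreesL {α : Type} : List (PTree α) → List (PTree α)
    | [] => []
    | t :: ts => subtreesT t ++ subtreesL ts
end

end PTree

open PTree

/-- The pre-order `π(X)` of a forest: the list of all its subtrees. -/
def preorder {α : Type} (F : Forest α) : List (PTree α) := PTree.subtreesL F

/-- The size `|X|` of a forest: the length of its pre-order. -/
def fsize {α : Type} (F : Forest α) : ℕ := (preorder F).length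

/-- The `i`-th subtree `x̄_i` (1-indexed pre-order) of a forest, if it exists. -/
def treeAt {α : Type} (F : Forest α) (i : ℕ) : Option (PTree α) := (preorder F)[i - 1]?

/-- The label `x_i` of the `i`-th subtree, as an element of `𝒳 ∪ {−}`
(`none` plays the role of the gap symbol `−`). -/
def labelAt {α : Type} (F : Forest α) (i : ℕ) : Option α := (treeAt F i).map PTree.label

/-- The number of nodes of the `i`-th subtree `x̄_i`. -/
def sizeAt {α : Type} (F : Forest α) (i : ℕ) : ℕ := ((treeAt F i).map PTree.size).getD 0

/-- A cost function over `α`: a real-valued function on `(𝒳 ∪ {−}) × (𝒳 ∪ {−})`,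
where the gap symbol `−` is modelled by `none`. -/
abbrev Cost (α : Type) := Option α → Option α → ℝ

/-- `c` is non-negative. -/
def Nonneg {α : Type} (c : Cost α) : Prop := ∀ x y, 0 ≤ c x y
/-- `c` is self-equal. -/
def SelfEq {α : Type} (c : Cost α) : Prop := ∀ x, c x x = 0
/-- `c` is discernible. -/
def Discernible {α : Type} (c : Cost α) : Prop := ∀ x y, x ≠ y → 0 < c x y
/-- `c` is symmetric. -/
def Symm {α : Type} (c : Cost α) : Prop := ∀ x y, c x y = c y x
/-- `c` conforms to the triangular inequality. -/
def Triangle {α : Type} (c : Cost α) : Prop := ∀ x y z, c x z ≤ c x y + c y z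

/-- Deletion of the first root: its children are spliced into its place. -/
def delRoot {α : Type} : Forest α → Forest α
  | [] => []
  | PTree.node _ cs :: ts => cs ++ ts

/-- Replacement of the label of the first root by `y`. -/
def repRoot {α : Type} (y : α) : Forest α → Forest α
  | [] => []
  | PTree.node _ cs :: ts => PTree.node y cs :: ts

/-- Insertion of a new root labeled `y` at root level, adopting the trees
`l` to `r-1` of the forest as its children. -/
def insRoot {α : Type} (y : α) (l r : ℕ) (F : Forest α) : Forest α :=
  if r > F.length + 1 ∨ l > r ∨ l < 1 then F
  else if l = r then F.take (l - 1) ++ [PTree.node y []] ++ F.drop (l - 1)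
  else F.take (l - 1) ++ [PTree.node y ((F.drop (l - 1)).take (r - l))] ++ F.drop (r - 1)

/-- `del_i`: deletion of the node with pre-order index `i`. -/
def applyDel {α : Type} : ℕ → Forest α → Forest α
  | _, [] => []
  | i, PTree.node a cs :: ts =>
    if i < 1 then PTree.node a cs :: ts
    else if i = 1 then delRoot (PTree.node a cs :: ts)
    else if i ≤ size (PTree.node a cs) then PTree.node a (applyDel (i - 1) cs) :: ts
    else PTree.node a cs :: applyDel (i - size (PTree.node a cs)) ts
  termination_by _ F => sizeOf F

/-- `rep_{i,y}`: replacement of the label of the node with pre-order index `i` by `y`. -/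
def applyRep {α : Type} (y : α) : ℕ → Forest α → Forest α
  | _, [] => []
  | i, PTree.node a cs :: ts =>
    if i < 1 then PTree.node a cs :: ts
    else if i = 1 then repRoot y (PTree.node a cs :: ts)
    else if i ≤ size (PTree.node a cs) then PTree.node a (applyRep y (i - 1) cs) :: ts
    else PTree.node a cs :: applyRep y (i - size (PTree.node a cs)) ts
  termination_by _ F => sizeOf F

/-- `ins_{i,y,l,r}`: insertion of a node labeled `y` as a child of the node with
pre-order index `i` (at root level if `i = 0`), adopting that node's children
`l` through `r-1` as its children. -/
def applyIns {α : Type} (y : α) (l r : ℕ) : ℕ → Forest α → Forest α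
  | 0, F => insRoot y l r F
  | _ + 1, [] => []
  | i + 1, PTree.node a cs :: ts =>
    if i + 1 ≤ size (PTree.node a cs) then PTree.node a (applyIns y l r i cs) :: ts
    else PTree.node a cs :: applyIns y l r (i + 1 - size (PTree.node a cs)) ts
  termination_by _ F => sizeOf F

/-- The standard edits: deletions `del_i`, replacements `rep_{i,y}` and
insertions `ins_{i,y,l,r}`. -/
inductive Edit (α : Type) where
  | del (i : ℕ)
  | rep (i : ℕ) (y : α)
  | ins (i : ℕ) (y : α) (l r : ℕ)

/-- Application of a single edit to a forest. -/
def Edit.apply {α : Type} : Edit α → Forest α → Forest α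
  | .del i, F => applyDel i F
  | .rep i y, F => applyRep y i F
  | .ins i y l r, F => applyIns y l r i F

/-- Application of an edit script `δ̄ = δ₁,…,δ_T` to a forest (left to right). -/
def applyScript {α : Type} (δ : List (Edit α)) (F : Forest α) : Forest α :=
  δ.foldl (fun F e => e.apply F) F

open Classical in
/-- The cost of a single edit with respect to the forest it is applied to:
`0` if the edit leaves the forest unchanged, and otherwise `c(x_i, y)` for a
replacement, `c(x_i, −)` for a deletion and `c(−, y)` for an insertion. -/
noncomputable def editCost {α : Type} (c : Cost α) (e : Edit α) (F : Forest α) : ℝ :=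
  if e.apply F = F then 0
  else
    match e with
    | .del i => c (labelAt F i) none
    | .rep i y => c (labelAt F i) (some y)
    | .ins _ y _ _ => c none (some y)

/-- The cost `c(δ̄, X)` of an edit script: the sum of the costs of its edits,
each evaluated on the forest to which it is applied. -/
noncomputable def scriptCost {α : Type} (c : Cost α) : List (Edit α) → Forest α → ℝ
  | [], _ => 0
  | e :: es, F => editCost c e F + scriptCost c es (e.apply F)

/-- `x̄_k` is a (proper) ancestor of `x̄_i`, expressed via 1-indexed pre-order indices:
the descendants of `x̄_k` occupy exactly the pre-order indices `k+1, …, k + |x̄_k| - 1`. -/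
def AncestorIdx {α : Type} (F : Forest α) (k i : ℕ) : Prop :=
  k < i ∧ i < k + sizeAt F k

/-- A tree mapping between two forests: a set `M ⊆ {1,…,|F|} × {1,…,|G|}` such that
for all `(i,j), (i',j') ∈ M` we have `i = i' ↔ j = j'`, `i ≤ i' ↔ j ≤ j'`, and
`x̄_i` is an ancestor of `x̄_{i'}` iff `ȳ_j` is an ancestor of `ȳ_{j'}`. -/
def IsTreeMapping {α : Type} (F G : Forest α) (M : Finset (ℕ × ℕ)) : Prop :=
  (∀ p ∈ M, 1 ≤ p.1 ∧ p.1 ≤ fsize F ∧ 1 ≤ p.2 ∧ p.2 ≤ fsize G) ∧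
  (∀ p ∈ M, ∀ q ∈ M,
    (p.1 = q.1 ↔ p.2 = q.2) ∧
    (p.1 ≤ q.1 ↔ p.2 ≤ q.2) ∧
    (AncestorIdx F p.1 q.1 ↔ AncestorIdx G p.2 q.2))

/-- The cost `c(M, X, Y)` of a tree mapping: the sum of the replacement costs of
the mapped pairs, the deletion costs of the unmapped nodes of `X`, and the
insertion costs of the unmapped nodes of `Y`. -/
noncomputable def mapCost {α : Type} (c : Cost α) (F G : Forest α) (M : Finset (ℕ × ℕ)) : ℝ :=
  (∑ p ∈ M, c (labelAt F p.1) (labelAt G p.2))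
  + (∑ i ∈ (Finset.Icc 1 (fsize F)).filter (fun i => ∀ p ∈ M, p.1 ≠ i), c (labelAt F i) none)
  + (∑ j ∈ (Finset.Icc 1 (fsize G)).filter (fun j => ∀ p ∈ M, p.2 ≠ j), c none (labelAt G j))

/-- A co-optimal tree mapping: a tree mapping of minimum cost. -/
def IsCoOptimal {α : Type} (c : Cost α) (F G : Forest α) (M : Finset (ℕ × ℕ)) : Prop :=
  IsTreeMapping F G M ∧
  ∀ M' : Finset (ℕ × ℕ), IsTreeMapping F G M' → mapCost c F G M ≤ mapCost c F G M'

/-- The pre-order index (in the output forest) of the node inserted by the edit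
`ins_{i,y,l,r}` applied to `F`. -/
def insPos {α : Type} (F : Forest α) (i l : ℕ) : ℕ :=
  if i = 0 then PTree.sizeL (F.take (l - 1)) + 1
  else
    match treeAt F i with
    | some t => i + PTree.sizeL (t.children.take (l - 1)) + 1
    | none => 0

open Classical in
/-- One step of the recursive construction of the mapping corresponding to an edit
script: `F` is the forest to which the edit `e` is applied, and `M` is the mapping
constructed for the preceding edits. Replacements (and ineffective edits) leave the
mapping unchanged; a deletion of the node with current pre-order index `j` removes
the pair with second coordinate `j` and decrements all larger second coordinates;
an insertion at current pre-order position `j` increments all second coordinates `≥ j`. -/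
noncomputable def stepMap {α : Type} (F : Forest α) (e : Edit α) (M : Finset (ℕ × ℕ)) :
    Finset (ℕ × ℕ) :=
  if e.apply F = F then M
  else
    match e with
    | .rep _ _ => M
    | .del j =>
        (M.filter (fun p => p.2 < j)) ∪
          ((M.filter (fun p => j < p.2)).image (fun p => (p.1, p.2 - 1)))
    | .ins i _ l _ =>
        (M.filter (fun p => p.2 < insPos F i l)) ∪
          ((M.filter (fun p => insPos F i l ≤ p.2)).image (fun p => (p.1, p.2 + 1)))

/-- The mapping `M_δ̄` corresponding to an edit script `δ̄` applied to a forest `F`: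
start with the identity mapping `{(1,1),…,(|F|,|F|)}` and update it edit by edit. -/
noncomputable def mapOfScript {α : Type} (δ : List (Edit α)) (F : Forest α) : Finset (ℕ × ℕ) :=
  (δ.foldl (fun st e => (e.apply st.1, stepMap st.1 e st.2))
    (F, (Finset.Icc 1 (fsize F)).image (fun i => (i, i)))).2


section AuxLemmas
open PTree

/-! ### Generic list lemmas -/

theorem aux_getElem?_insertIdx {β : Type*} (y : β) :
    ∀ (p : ℕ) (L : List β), p ≤ L.length → ∀ k : ℕ,
      (L.insertIdx p y)[k]? = if k < p then L[k]? else if k = p then some y else L[k-1]?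
  | 0, L, _, k => by cases k <;> simp [List.insertIdx_zero]
  | p+1, [], h, k => by simp at h
  | p+1, a :: L, h, k => by
      rw [List.insertIdx_succ_cons]
      cases k with
      | zero => simp
      | succ k =>
        have ih := aux_getElem?_insertIdx y p L (by simpa using h) k
        simp only [List.getElem?_cons_succ]
        rw [ih]
        rcases Nat.lt_trichotomy k p with h1 | h1 | h1
        · rw [if_pos h1, if_pos (by omega)]
        · subst h1
          rw [if_neg (by omega), if_pos rfl, if_neg (by omega), if_pos rfl]
        · rw [if_neg (by omega), if_neg (by omega), if_neg (by omega), if_neg (by omega)]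
          have hk : k - 1 + 1 = k := by omega
          have hk2 : k + 1 - 1 = k := by omega
          rw [hk2]
          cases k with
          | zero => omega
          | succ k => simp

theorem aux_insertIdx_append_left {β : Type*} (y : β) :
    ∀ (A B : List β) (n : ℕ), n ≤ A.length →
      (A ++ B).insertIdx n y = A.insertIdx n y ++ B
  | A, B, 0, _ => by simp [List.insertIdx_zero]
  | [], B, n+1, h => by simp at h
  | a :: A, B, n+1, h => by
      simp only [List.cons_append, List.insertIdx_succ_cons]
      rw [aux_insertIdx_append_left y A B n (by simpa using h)]

theorem aux_insertIdx_append_right {β : Type*} (y : β) :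
    ∀ (A B : List β) (n : ℕ),
      (A ++ B).insertIdx (A.length + n) y = A ++ B.insertIdx n y
  | [], B, n => by simp
  | a :: A, B, n => by
      simp only [List.cons_append, List.length_cons]
      have h1 : A.length + 1 + n = (A.length + n) + 1 := by omega
      rw [h1, List.insertIdx_succ_cons, aux_insertIdx_append_right y A B n]

/-! ### Basic lemmas about trees, sizes, pre-orders and labels -/

variable {α : Type}

theorem subtreesL_append : ∀ (A B : Forest α), subtreesL (A ++ B) = subtreesL A ++ subtreesL B
  | [], B => rfl
  | t :: A, B => by
      show subtreesL (t :: (A ++ B)) = _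
      rw [subtreesL, subtreesL, subtreesL_append A B, List.append_assoc]

theorem subtreesL_length : ∀ (F : Forest α), (subtreesL F).length = sizeL F
  | [] => rfl
  | PTree.node a cs :: ts => by
      rw [subtreesL, subtreesT, sizeL, size]
      simp only [List.length_append, List.length_cons,
        subtreesL_length cs, subtreesL_length ts]
      omega
  termination_by F => sizeOf F

theorem fsize_eq_sizeL (F : Forest α) : fsize F = sizeL F := by
  rw [fsize, preorder, subtreesL_length]

/-- List of labels in pre-order. -/
def labels (F : Forest α) : List α := (subtreesL F).map PTree.label

theorem labels_cons (a : α) (cs ts : Forest α) :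
    labels (PTree.node a cs :: ts) = a :: (labels cs ++ labels ts) := by
  rw [labels, subtreesL, subtreesT]
  simp [labels, PTree.label]

theorem labels_append (A B : Forest α) : labels (A ++ B) = labels A ++ labels B := by
  simp [labels, subtreesL_append]

theorem length_labels (F : Forest α) : (labels F).length = fsize F := by
  rw [labels, List.length_map, fsize, preorder]

theorem labelAt_eq (F : Forest α) (j : ℕ) : labelAt F j = (labels F)[j-1]? := by
  rw [labelAt, treeAt, labels, preorder, List.getElem?_map]

theorem size_node (a : α) (cs : Forest α) : size (PTree.node a cs) = 1 + fsize cs := by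
  rw [size, fsize_eq_sizeL]

theorem fsize_cons (a : α) (cs ts : Forest α) :
    fsize (PTree.node a cs :: ts) = 1 + fsize cs + fsize ts := by
  rw [fsize_eq_sizeL, sizeL, size, fsize_eq_sizeL, fsize_eq_sizeL]

theorem sizeL_append : ∀ (A B : Forest α), sizeL (A ++ B) = sizeL A + sizeL B
  | [], B => by rw [sizeL]; simp
  | t :: A, B => by
      show sizeL (t :: (A ++ B)) = _
      rw [sizeL, sizeL, sizeL_append A B]
      omega

end AuxLemmas


section StructLemmas
open PTree
variable {α : Type}

theorem applyRep_out (y : α) : ∀ (j : ℕ) (F : Forest α), (j < 1 ∨ fsize F < j) → applyRep y j F = F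
  | j, [], _ => by rw [applyRep]
  | j, PTree.node a cs :: ts, h => by
      rw [applyRep]
      rcases h with h | h
      · rw [if_pos h]
      · rw [fsize_cons] at h
        have hs := size_node a cs
        rw [if_neg (by omega), if_neg (by omega), if_neg (by omega),
          applyRep_out y (j - size (PTree.node a cs)) ts (Or.inr (by omega))]
  termination_by j F => sizeOf F

theorem applyDel_out : ∀ (j : ℕ) (F : Forest α), (j < 1 ∨ fsize F < j) → applyDel j F = F
  | j, [], _ => by rw [applyDel]
  | j, PTree.node a cs :: ts, h => by
      rw [applyDel]
      rcases h with h | h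
      · rw [if_pos h]
      · rw [fsize_cons] at h
        have hs := size_node a cs
        rw [if_neg (by omega), if_neg (by omega), if_neg (by omega),
          applyDel_out (j - size (PTree.node a cs)) ts (Or.inr (by omega))]
  termination_by j F => sizeOf F

theorem applyRep_labels (y : α) : ∀ (j : ℕ) (F : Forest α), 1 ≤ j → j ≤ fsize F →
    labels (applyRep y j F) = (labels F).set (j-1) y
  | j, [], h1, h2 => by
      rw [fsize] at h2
      simp [preorder, subtreesL] at h2
      omega
  | j, PTree.node a cs :: ts, h1, h2 => by
      have hs := size_node a cs
      have hf := fsize_cons a cs ts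
      have hlen : (labels cs).length = fsize cs := length_labels cs
      rw [applyRep, if_neg (by omega)]
      by_cases hj1 : j = 1
      · subst hj1
        rw [if_pos rfl]
        show labels (repRoot y (PTree.node a cs :: ts)) = _
        rw [repRoot, labels_cons, labels_cons]
        rfl
      · rw [if_neg hj1]
        by_cases hj2 : j ≤ size (PTree.node a cs)
        · rw [if_pos hj2, labels_cons, labels_cons,
            applyRep_labels y (j-1) cs (by omega) (by omega)]
          have h3 : j - 1 = (j - 2) + 1 := by omega
          rw [h3, List.set_cons_succ, List.set_append, if_pos (by omega), Nat.add_sub_cancel]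
        · rw [if_neg hj2, labels_cons, labels_cons,
            applyRep_labels y (j - size (PTree.node a cs)) ts (by omega) (by omega)]
          have h3 : j - 1 = (j - 2) + 1 := by omega
          rw [h3, List.set_cons_succ, List.set_append, if_neg (by omega)]
          have h4 : j - 2 - (labels cs).length = j - size (PTree.node a cs) - 1 := by omega
          rw [h4]
  termination_by j F => sizeOf F

theorem applyDel_labels : ∀ (j : ℕ) (F : Forest α), 1 ≤ j → j ≤ fsize F →
    labels (applyDel j F) = (labels F).eraseIdx (j-1)
  | j, [], h1, h2 => by
      rw [fsize] at h2
      simp [preorder, subtreesL] at h2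
      omega
  | j, PTree.node a cs :: ts, h1, h2 => by
      have hs := size_node a cs
      have hf := fsize_cons a cs ts
      have hlen : (labels cs).length = fsize cs := length_labels cs
      rw [applyDel, if_neg (by omega)]
      by_cases hj1 : j = 1
      · subst hj1
        rw [if_pos rfl]
        show labels (delRoot (PTree.node a cs :: ts)) = _
        rw [delRoot, labels_append, labels_cons]
        rfl
      · rw [if_neg hj1]
        by_cases hj2 : j ≤ size (PTree.node a cs)
        · rw [if_pos hj2, labels_cons, labels_cons,
            applyDel_labels (j-1) cs (by omega) (by omega)]
          have h3 : j - 1 = (j - 2) + 1 := by omega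
          rw [h3, List.eraseIdx_cons_succ, List.eraseIdx_append_of_lt_length (by omega),
            Nat.add_sub_cancel]
        · rw [if_neg hj2, labels_cons, labels_cons,
            applyDel_labels (j - size (PTree.node a cs)) ts (by omega) (by omega)]
          have h3 : j - 1 = (j - 2) + 1 := by omega
          rw [h3, List.eraseIdx_cons_succ, List.eraseIdx_append_of_length_le (by omega)]
          have h4 : j - 2 - (labels cs).length = j - size (PTree.node a cs) - 1 := by omega
          rw [h4]
  termination_by j F => sizeOf F

theorem subtreesT_length (t : PTree α) : (subtreesT t).length = size t := by
  obtain ⟨a, cs⟩ := t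
  rw [subtreesT, size]
  simp [subtreesL_length cs]
  omega

theorem treeAt_cons (t : PTree α) (ts : Forest α) (j : ℕ) :
    treeAt (t :: ts) j = (subtreesT t ++ subtreesL ts)[j-1]? := by
  rw [treeAt, preorder, subtreesL]

theorem treeAt_cons_one (a : α) (cs ts : Forest α) :
    treeAt (PTree.node a cs :: ts) 1 = some (PTree.node a cs) := by
  rw [treeAt_cons, subtreesT]
  simp

theorem treeAt_cons_left (a : α) (cs ts : Forest α) (i : ℕ) (h1 : 1 ≤ i) (h2 : i ≤ fsize cs) :
    treeAt (PTree.node a cs :: ts) (i+1) = treeAt cs i := by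
  rw [treeAt_cons, subtreesT, treeAt, preorder]
  have h3 : i + 1 - 1 = (i - 1) + 1 := by omega
  rw [h3]
  rw [List.cons_append, List.getElem?_cons_succ, List.getElem?_append,
    if_pos (by rw [subtreesL_length, ← fsize_eq_sizeL]; omega)]

theorem treeAt_cons_right (t : PTree α) (ts : Forest α) (i : ℕ) (h1 : size t ≤ i) :
    treeAt (t :: ts) (i+1) = treeAt ts (i + 1 - size t) := by
  rw [treeAt_cons, treeAt, preorder]
  have h3 : i + 1 - 1 = i := by omega
  rw [h3, List.getElem?_append_right (by rw [subtreesT_length]; omega), subtreesT_length]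
  congr 1
  omega

theorem labels_nil : labels ([] : Forest α) = [] := by
  rw [labels, subtreesL]
  rfl

theorem insPos_zero (F : Forest α) (l : ℕ) :
    insPos F 0 l = sizeL (F.take (l-1)) + 1 := by
  rw [insPos, if_pos rfl]

theorem insPos_of_treeAt {F : Forest α} {i : ℕ} (l : ℕ) (hi : i ≠ 0) {t : PTree α}
    (h : treeAt F i = some t) :
    insPos F i l = i + sizeL (t.children.take (l-1)) + 1 := by
  rw [insPos, if_neg hi, h]

theorem insPos_of_treeAt_none {F : Forest α} {i : ℕ} (l : ℕ) (hi : i ≠ 0)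
    (h : treeAt F i = none) : insPos F i l = 0 := by
  rw [insPos, if_neg hi, h]

theorem insRoot_labels (y : α) (l r : ℕ) (F : Forest α) (h : insRoot y l r F ≠ F) :
    1 ≤ insPos F 0 l ∧ insPos F 0 l ≤ fsize F + 1 ∧
      labels (insRoot y l r F) = (labels F).insertIdx (insPos F 0 l - 1) y := by
  rw [insRoot] at h ⊢
  by_cases hg : r > F.length + 1 ∨ l > r ∨ l < 1
  · rw [if_pos hg] at h; exact absurd rfl h
  · rw [if_neg hg] at h ⊢
    push_neg at hg
    obtain ⟨hg1, hg2, hg3⟩ := hg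
    have hp : insPos F 0 l = sizeL (F.take (l-1)) + 1 := insPos_zero F l
    have hA : (labels (F.take (l-1))).length = sizeL (F.take (l-1)) := by
      rw [length_labels, fsize_eq_sizeL]
    have hsplit : F.take (l-1) ++ F.drop (l-1) = F := List.take_append_drop _ _
    have hszle : sizeL (F.take (l-1)) ≤ fsize F := by
      rw [fsize_eq_sizeL]
      conv_rhs => rw [← hsplit]
      rw [sizeL_append]
      omega
    refine ⟨by omega, by omega, ?_⟩
    rw [hp]
    have hidx : sizeL (F.take (l-1)) + 1 - 1 = (labels (F.take (l-1))).length + 0 := by omega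
    by_cases hlr : l = r
    · rw [if_pos hlr]
      have hLF : labels F = labels (F.take (l-1)) ++ labels (F.drop (l-1)) := by
        conv_lhs => rw [← hsplit]
        rw [labels_append]
      rw [hLF, labels_append, labels_append, labels_cons, labels_nil, hidx,
        aux_insertIdx_append_right]
      simp [List.insertIdx_zero]
    · rw [if_neg hlr]
      have hdd : (F.drop (l-1)).take (r-l) ++ F.drop (r-1) = F.drop (l-1) := by
        have hd2 : F.drop (r-1) = (F.drop (l-1)).drop (r-l) := by
          rw [List.drop_drop]
          congr 1
          omega
        rw [hd2, List.take_append_drop]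
      have hLF : labels F = labels (F.take (l-1)) ++
          (labels ((F.drop (l-1)).take (r-l)) ++ labels (F.drop (r-1))) := by
        conv_lhs => rw [← hsplit, ← hdd]
        rw [labels_append, labels_append]
      rw [hLF, labels_append, labels_append, labels_cons, labels_nil, hidx,
        aux_insertIdx_append_right]
      simp [List.insertIdx_zero, List.append_assoc]

theorem applyIns_labels (y : α) (l r : ℕ) : ∀ (i : ℕ) (F : Forest α),
    applyIns y l r i F ≠ F →
    1 ≤ insPos F i l ∧ insPos F i l ≤ fsize F + 1 ∧
      labels (applyIns y l r i F) = (labels F).insertIdx (insPos F i l - 1) y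
  | 0, F, h => by rw [applyIns] at h ⊢; exact insRoot_labels y l r F h
  | i+1, [], h => by rw [applyIns] at h; exact absurd rfl h
  | i+1, PTree.node a cs :: ts, h => by
      have hs := size_node a cs
      have hf := fsize_cons a cs ts
      have hlencs : (labels cs).length = fsize cs := length_labels cs
      rw [applyIns] at h ⊢
      by_cases hc : i + 1 ≤ size (PTree.node a cs)
      · rw [if_pos hc] at h ⊢
        have hne : applyIns y l r i cs ≠ cs := fun he => h (by rw [he])
        obtain ⟨ih1, ih2, ih3⟩ := applyIns_labels y l r i cs hne
        have hpos : insPos (PTree.node a cs :: ts) (i+1) l = insPos cs i l + 1 := by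
          rcases Nat.eq_zero_or_pos i with hi0 | hi0
          · subst hi0
            rw [insPos_of_treeAt l (by omega) (treeAt_cons_one a cs ts), insPos_zero]
            show 0 + 1 + sizeL (List.take (l - 1) cs) + 1 = _
            omega
          · rcases htA : treeAt cs i with _ | t'
            · rw [insPos_of_treeAt_none l (by omega) htA] at ih1
              omega
            · have hile : i ≤ fsize cs := by
                by_contra hcon
                rw [treeAt, preorder, List.getElem?_eq_none
                  (by rw [subtreesL_length, ← fsize_eq_sizeL]; omega)] at htA
                cases htA
              rw [insPos_of_treeAt l (by omega)
                  (by rw [treeAt_cons_left a cs ts i hi0 hile]; exact htA),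
                insPos_of_treeAt l (by omega) htA]
              omega
        refine ⟨by omega, by omega, ?_⟩
        rw [labels_cons, labels_cons, ih3, hpos]
        have h1 : insPos cs i l + 1 - 1 = (insPos cs i l - 1) + 1 := by omega
        rw [h1, List.insertIdx_succ_cons, aux_insertIdx_append_left y _ _ _ (by omega)]
      · rw [if_neg hc] at h ⊢
        have hne : applyIns y l r (i + 1 - size (PTree.node a cs)) ts ≠ ts :=
          fun he => h (by rw [he])
        obtain ⟨ih1, ih2, ih3⟩ := applyIns_labels y l r (i + 1 - size (PTree.node a cs)) ts hne
        have hk1 : 1 ≤ i + 1 - size (PTree.node a cs) := by omega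
        have hpos : insPos (PTree.node a cs :: ts) (i+1) l
            = insPos ts (i + 1 - size (PTree.node a cs)) l + size (PTree.node a cs) := by
          rcases htA : treeAt ts (i + 1 - size (PTree.node a cs)) with _ | t'
          · rw [insPos_of_treeAt_none l (by omega) htA] at ih1
            omega
          · rw [insPos_of_treeAt l (by omega)
                (by rw [treeAt_cons_right (PTree.node a cs) ts i (by omega)]; exact htA),
              insPos_of_treeAt l (by omega) htA]
            omega
        refine ⟨by omega, by omega, ?_⟩
        rw [labels_cons, labels_cons, ih3, hpos]
        have h1 : insPos ts (i + 1 - size (PTree.node a cs)) l + size (PTree.node a cs) - 1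
            = ((labels cs).length + (insPos ts (i + 1 - size (PTree.node a cs)) l - 1)) + 1 := by
          omega
        rw [h1, List.insertIdx_succ_cons, aux_insertIdx_append_right]
  termination_by i F => sizeOf F

end StructLemmas


section CostLemmas
variable {α : Type}

/-- Invariant maintained along the construction of the mapping. -/
def InvM (m n : ℕ) (M : Finset (ℕ × ℕ)) : Prop :=
  (∀ p ∈ M, 1 ≤ p.1 ∧ p.1 ≤ m ∧ 1 ≤ p.2 ∧ p.2 ≤ n) ∧
  (∀ p ∈ M, ∀ q ∈ M, p.1 = q.1 → p = q) ∧
  (∀ p ∈ M, ∀ q ∈ M, p.2 = q.2 → p = q)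

/-- Abstract version of the mapping cost, in terms of the label lists. -/
noncomputable def Gcost (c : Cost α) (K L : List α) (M : Finset (ℕ × ℕ)) : ℝ :=
  (∑ p ∈ M, c K[p.1-1]? L[p.2-1]?)
  + (∑ i ∈ (Finset.Icc 1 K.length).filter (fun i => ∀ p ∈ M, p.1 ≠ i), c K[i-1]? none)
  + (∑ j ∈ (Finset.Icc 1 L.length).filter (fun j => ∀ p ∈ M, p.2 ≠ j), c none L[j-1]?)

theorem mapCost_eq_Gcost (c : Cost α) (F G : Forest α) (M : Finset (ℕ × ℕ)) :
    mapCost c F G M = Gcost c (labels F) (labels G) M := by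
  simp only [mapCost, Gcost, labelAt_eq, length_labels]

theorem Gcost_rep (c : Cost α) (htr : Triangle c) (K L : List α) (M : Finset (ℕ × ℕ))
    (hInv : InvM K.length L.length M) (j : ℕ) (y : α) (hj1 : 1 ≤ j) (hj2 : j ≤ L.length) :
    Gcost c K (L.set (j-1) y) M ≤ Gcost c K L M + c L[j-1]? (some y) := by
  obtain ⟨hbd, hi1, hi2⟩ := hInv
  have hlen : (L.set (j-1) y).length = L.length := List.length_set
  have hget : ∀ k : ℕ, 1 ≤ k → k ≠ j → (L.set (j-1) y)[k-1]? = L[k-1]? :=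
    fun k h1 h2 => List.getElem?_set_ne (by omega)
  have hgetj : (L.set (j-1) y)[j-1]? = some y := List.getElem?_set_self (by omega)
  rw [Gcost, Gcost, hlen]
  by_cases hex : ∃ p0 ∈ M, p0.2 = j
  · obtain ⟨p0, hp0M, hp0⟩ := hex
    have h1 : (∑ p ∈ M, c K[p.1-1]? (L.set (j-1) y)[p.2-1]?)
        ≤ (∑ p ∈ M, c K[p.1-1]? L[p.2-1]?) + c L[j-1]? (some y) := by
      rw [← Finset.add_sum_erase M (fun p => c K[p.1-1]? (L.set (j-1) y)[p.2-1]?) hp0M,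
        ← Finset.add_sum_erase M (fun p => c K[p.1-1]? L[p.2-1]?) hp0M]
      have heq : (∑ p ∈ M.erase p0, c K[p.1-1]? (L.set (j-1) y)[p.2-1]?)
          = ∑ p ∈ M.erase p0, c K[p.1-1]? L[p.2-1]? := by
        refine Finset.sum_congr rfl (fun p hp => ?_)
        have hpM := Finset.mem_of_mem_erase hp
        have hne := Finset.ne_of_mem_erase hp
        have hpj : p.2 ≠ j := fun hcon => hne (hi2 p hpM p0 hp0M (by rw [hcon, hp0]))
        rw [hget p.2 (hbd p hpM).2.2.1 hpj]
      rw [heq, hp0, hgetj]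
      have := htr (K[p0.1-1]?) (L[j-1]?) (some y)
      linarith
    have h3 : (∑ k ∈ (Finset.Icc 1 L.length).filter (fun k => ∀ p ∈ M, p.2 ≠ k),
          c none (L.set (j-1) y)[k-1]?)
        = ∑ k ∈ (Finset.Icc 1 L.length).filter (fun k => ∀ p ∈ M, p.2 ≠ k), c none L[k-1]? := by
      refine Finset.sum_congr rfl fun k hk => ?_
      simp only [Finset.mem_filter, Finset.mem_Icc] at hk
      have hkj : k ≠ j := fun hcon => (hk.2 p0 hp0M) (by rw [hp0, hcon])
      rw [hget k hk.1.1 hkj]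
    rw [h3]
    linarith
  · push_neg at hex
    have h1 : (∑ p ∈ M, c K[p.1-1]? (L.set (j-1) y)[p.2-1]?)
        = ∑ p ∈ M, c K[p.1-1]? L[p.2-1]? :=
      Finset.sum_congr rfl fun p hp => by rw [hget p.2 (hbd p hp).2.2.1 (hex p hp)]
    have hjmem : j ∈ (Finset.Icc 1 L.length).filter (fun k => ∀ p ∈ M, p.2 ≠ k) := by
      simp only [Finset.mem_filter, Finset.mem_Icc]
      exact ⟨⟨hj1, hj2⟩, hex⟩
    have h3 : (∑ k ∈ (Finset.Icc 1 L.length).filter (fun k => ∀ p ∈ M, p.2 ≠ k),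
          c none (L.set (j-1) y)[k-1]?)
        ≤ (∑ k ∈ (Finset.Icc 1 L.length).filter (fun k => ∀ p ∈ M, p.2 ≠ k), c none L[k-1]?)
          + c L[j-1]? (some y) := by
      rw [← Finset.add_sum_erase _ (fun k => c none (L.set (j-1) y)[k-1]?) hjmem,
        ← Finset.add_sum_erase _ (fun k => c none L[k-1]?) hjmem]
      have heq : (∑ k ∈ ((Finset.Icc 1 L.length).filter (fun k => ∀ p ∈ M, p.2 ≠ k)).erase j,
            c none (L.set (j-1) y)[k-1]?)
          = ∑ k ∈ ((Finset.Icc 1 L.length).filter (fun k => ∀ p ∈ M, p.2 ≠ k)).erase j,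
            c none L[k-1]? := by
        refine Finset.sum_congr rfl fun k hk => ?_
        have hne := Finset.ne_of_mem_erase hk
        have hkmem := Finset.mem_of_mem_erase hk
        simp only [Finset.mem_filter, Finset.mem_Icc] at hkmem
        rw [hget k hkmem.1.1 hne]
      rw [heq, hgetj]
      have := htr (none : Option α) (L[j-1]?) (some y)
      linarith
    linarith


theorem Gcost_del (c : Cost α) (hnn : Nonneg c) (htr : Triangle c) (K L : List α)
    (M : Finset (ℕ × ℕ)) (hInv : InvM K.length L.length M) (j : ℕ)
    (hj1 : 1 ≤ j) (hj2 : j ≤ L.length) :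
    Gcost c K (L.eraseIdx (j-1))
        ((M.filter (fun p => p.2 < j)) ∪
          ((M.filter (fun p => j < p.2)).image (fun p => (p.1, p.2 - 1))))
      ≤ Gcost c K L M + c L[j-1]? none := by
  obtain ⟨hbd, hi1, hi2⟩ := hInv
  set M' := (M.filter (fun p => p.2 < j)) ∪
      ((M.filter (fun p => j < p.2)).image (fun p => (p.1, p.2 - 1))) with hM'
  have hmem : ∀ q : ℕ × ℕ, q ∈ M' ↔
      (q ∈ M ∧ q.2 < j) ∨ (∃ p, p ∈ M ∧ j < p.2 ∧ q = (p.1, p.2 - 1)) := by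
    intro q
    simp only [hM', Finset.mem_union, Finset.mem_filter, Finset.mem_image]
    constructor
    · rintro (⟨h1, h2⟩ | ⟨p, ⟨ha, hb⟩, h3⟩)
      · exact Or.inl ⟨h1, h2⟩
      · exact Or.inr ⟨p, ha, hb, h3.symm⟩
    · rintro (⟨h1, h2⟩ | ⟨p, ha, hb, h3⟩)
      · exact Or.inl ⟨h1, h2⟩
      · exact Or.inr ⟨p, ⟨ha, hb⟩, h3.symm⟩
  have hlenL' : (L.eraseIdx (j-1)).length = L.length - 1 := by
    rw [List.length_eraseIdx, if_pos (by omega)]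
  have hget := fun k => List.getElem?_eraseIdx (l := L) (i := j-1) (j := k)
  rw [Gcost, Gcost, hlenL']
  -- First sum over M'
  have hdisj : Disjoint (M.filter (fun p => p.2 < j))
      ((M.filter (fun p => j < p.2)).image (fun p => (p.1, p.2 - 1))) := by
    rw [Finset.disjoint_left]
    rintro q hq1 hq2
    simp only [Finset.mem_filter] at hq1
    simp only [Finset.mem_image, Finset.mem_filter] at hq2
    obtain ⟨p, ⟨hpM, hpj⟩, hq⟩ := hq2
    have hq2' : q.2 = p.2 - 1 := by rw [← hq]
    omega
  have hinj : ∀ p ∈ M.filter (fun p => j < p.2), ∀ q ∈ M.filter (fun p => j < p.2),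
      (p.1, p.2 - 1) = (q.1, q.2 - 1) → p = q := by
    intro p hp q hq hpq
    simp only [Finset.mem_filter] at hp hq
    have h2 : p.2 - 1 = q.2 - 1 := congrArg Prod.snd hpq
    exact hi2 p hp.1 q hq.1 (by omega)
  have hS1 : (∑ q ∈ M', c K[q.1-1]? (L.eraseIdx (j-1))[q.2-1]?) =
      (∑ p ∈ M.filter (fun p => p.2 < j), c K[p.1-1]? L[p.2-1]?)
      + ∑ p ∈ M.filter (fun p => j < p.2), c K[p.1-1]? L[p.2-1]? := by
    rw [hM', Finset.sum_union hdisj, Finset.sum_image hinj]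
    congr 1
    · refine Finset.sum_congr rfl fun p hp => ?_
      simp only [Finset.mem_filter] at hp
      have hb := hbd p hp.1
      rw [hget (p.2-1), if_pos (by omega)]
    · refine Finset.sum_congr rfl fun p hp => ?_
      simp only [Finset.mem_filter] at hp
      have hb := hbd p hp.1
      show c K[p.1-1]? (L.eraseIdx (j-1))[p.2-1-1]? = _
      rw [hget (p.2-1-1), if_neg (by omega)]
      congr 2
      omega
  have hdisj2 : Disjoint (M.filter (fun p => p.2 < j)) (M.filter (fun p => j < p.2)) := by
    rw [Finset.disjoint_left]
    rintro q hq1 hq2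
    simp only [Finset.mem_filter] at hq1 hq2
    omega
  have hunion : M.filter (fun p => p.2 < j) ∪ M.filter (fun p => j < p.2)
      = M.filter (fun p => ¬ p.2 = j) := by
    ext q
    simp only [Finset.mem_union, Finset.mem_filter]
    constructor
    · rintro (⟨h1, h2⟩ | ⟨h1, h2⟩) <;> exact ⟨h1, by omega⟩
    · rintro ⟨h1, h2⟩
      rcases Nat.lt_or_ge q.2 j with h | h
      · exact Or.inl ⟨h1, h⟩
      · exact Or.inr ⟨h1, by omega⟩
  have hkey : ∀ f : ℕ × ℕ → ℝ,
      (∑ p ∈ M.filter (fun p => p.2 < j), f p) + (∑ p ∈ M.filter (fun p => j < p.2), f p)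
      = ∑ p ∈ M.filter (fun p => ¬ p.2 = j), f p := by
    intro f
    rw [← Finset.sum_union hdisj2, hunion]
  have hkey2 : ∀ f : ℕ × ℕ → ℝ, (∑ p ∈ M, f p)
      = (∑ p ∈ M.filter (fun p => p.2 = j), f p) + ∑ p ∈ M.filter (fun p => ¬ p.2 = j), f p :=
    fun f => (Finset.sum_filter_add_sum_filter_not M (fun p => p.2 = j) f).symm
  -- Third sum reindexing (common to both cases)
  have hS3set : (Finset.Icc 1 (L.length-1)).filter (fun k => ∀ q ∈ M', q.2 ≠ k)
      = (((Finset.Icc 1 L.length).filter (fun k => ∀ p ∈ M, p.2 ≠ k)).erase j).image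
          (fun k => if k < j then k else k - 1) := by
    ext k'
    simp only [Finset.mem_image, Finset.mem_erase, Finset.mem_filter, Finset.mem_Icc]
    constructor
    · rintro ⟨⟨hk1, hk2⟩, hQ'⟩
      by_cases hkj : k' < j
      · refine ⟨k', ⟨by omega, ⟨by omega, by omega⟩, fun p hpM hcon => ?_⟩, by rw [if_pos hkj]⟩
        exact hQ' p ((hmem p).mpr (Or.inl ⟨hpM, by omega⟩)) hcon
      · refine ⟨k'+1, ⟨by omega, ⟨by omega, by omega⟩, fun p hpM hcon => ?_⟩,
          by rw [if_neg (by omega)]; omega⟩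
        exact hQ' (p.1, p.2-1) ((hmem _).mpr (Or.inr ⟨p, hpM, by omega, rfl⟩)) (by omega)
    · rintro ⟨k, ⟨hkj, ⟨hk1, hk2⟩, hQ⟩, rfl⟩
      split_ifs with hlt
      · refine ⟨⟨by omega, by omega⟩, fun q hq => ?_⟩
        rcases (hmem q).mp hq with ⟨hqM, hqlt⟩ | ⟨p, hpM, hpj, rfl⟩
        · exact hQ q hqM
        · show p.2 - 1 ≠ k
          omega
      · refine ⟨⟨by omega, by omega⟩, fun q hq => ?_⟩
        rcases (hmem q).mp hq with ⟨hqM, hqlt⟩ | ⟨p, hpM, hpj, rfl⟩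
        · omega
        · show p.2 - 1 ≠ k - 1
          intro hcon
          exact hQ p hpM (by omega)
  have hψinj : ∀ x ∈ ((Finset.Icc 1 L.length).filter (fun k => ∀ p ∈ M, p.2 ≠ k)).erase j,
      ∀ y ∈ ((Finset.Icc 1 L.length).filter (fun k => ∀ p ∈ M, p.2 ≠ k)).erase j,
      (if x < j then x else x - 1) = (if y < j then y else y - 1) → x = y := by
    intro x hx y hy hxy
    simp only [Finset.mem_erase, Finset.mem_filter, Finset.mem_Icc] at hx hy
    split_ifs at hxy <;> omega
  have hS3 : (∑ k ∈ (Finset.Icc 1 (L.length-1)).filter (fun k => ∀ q ∈ M', q.2 ≠ k),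
        c none (L.eraseIdx (j-1))[k-1]?)
      = ∑ k ∈ ((Finset.Icc 1 L.length).filter (fun k => ∀ p ∈ M, p.2 ≠ k)).erase j,
        c none L[k-1]? := by
    rw [hS3set, Finset.sum_image hψinj]
    refine Finset.sum_congr rfl fun k hk => ?_
    simp only [Finset.mem_erase, Finset.mem_filter, Finset.mem_Icc] at hk
    split_ifs with hlt
    · rw [hget (k-1), if_pos (by omega)]
    · show c none (L.eraseIdx (j-1))[k-1-1]? = _
      rw [hget (k-1-1), if_neg (by omega)]
      congr 2
      omega
  by_cases hex : ∃ p0 ∈ M, p0.2 = j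
  · obtain ⟨p0, hp0M, hp0⟩ := hex
    have hfil : M.filter (fun p => p.2 = j) = {p0} := by
      ext q
      simp only [Finset.mem_filter, Finset.mem_singleton]
      constructor
      · rintro ⟨hqM, hqj⟩
        exact hi2 q hqM p0 hp0M (by rw [hqj, hp0])
      · rintro rfl
        exact ⟨hp0M, hp0⟩
    -- first sums
    have hS1' : (∑ q ∈ M', c K[q.1-1]? (L.eraseIdx (j-1))[q.2-1]?)
        = (∑ p ∈ M, c K[p.1-1]? L[p.2-1]?) - c K[p0.1-1]? L[p0.2-1]? := by
      rw [hS1, hkey (fun p => c K[p.1-1]? L[p.2-1]?),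
        hkey2 (fun p => c K[p.1-1]? L[p.2-1]?), hfil, Finset.sum_singleton]
      ring
    -- second sums
    have hS2set : (Finset.Icc 1 K.length).filter (fun i => ∀ q ∈ M', q.1 ≠ i)
        = insert p0.1 ((Finset.Icc 1 K.length).filter (fun i => ∀ p ∈ M, p.1 ≠ i)) := by
      ext i
      simp only [Finset.mem_filter, Finset.mem_insert, Finset.mem_Icc]
      constructor
      · rintro ⟨hic, hP'⟩
        by_cases hip : i = p0.1
        · exact Or.inl hip
        · refine Or.inr ⟨hic, fun p hpM hpi => ?_⟩
          have hpne : p ≠ p0 := fun hcon => hip (by rw [← hpi, hcon])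
          have hpj : p.2 ≠ j := fun hcon => hpne (hi2 p hpM p0 hp0M (by rw [hcon, hp0]))
          rcases Nat.lt_or_ge p.2 j with hlt | hge
          · exact hP' p ((hmem p).mpr (Or.inl ⟨hpM, hlt⟩)) hpi
          · exact hP' (p.1, p.2-1) ((hmem _).mpr (Or.inr ⟨p, hpM, by omega, rfl⟩)) hpi
      · rintro (rfl | ⟨hic, hP⟩)
        · refine ⟨⟨(hbd p0 hp0M).1, (hbd p0 hp0M).2.1⟩, fun q hq => ?_⟩
          rcases (hmem q).mp hq with ⟨hqM, hqj⟩ | ⟨p, hpM, hpj, rfl⟩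
          · intro hcon
            have := hi1 q hqM p0 hp0M hcon
            rw [this, hp0] at hqj
            omega
          · intro hcon
            have := hi1 p hpM p0 hp0M hcon
            rw [this, hp0] at hpj
            omega
        · refine ⟨hic, fun q hq => ?_⟩
          rcases (hmem q).mp hq with ⟨hqM, _⟩ | ⟨p, hpM, _, rfl⟩
          · exact hP q hqM
          · exact hP p hpM
    have hp0notmem : p0.1 ∉ (Finset.Icc 1 K.length).filter (fun i => ∀ p ∈ M, p.1 ≠ i) := by
      simp only [Finset.mem_filter, Finset.mem_Icc]
      rintro ⟨-, hP⟩
      exact hP p0 hp0M rfl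
    have hS2' : (∑ i ∈ (Finset.Icc 1 K.length).filter (fun i => ∀ q ∈ M', q.1 ≠ i), c K[i-1]? none)
        = c K[p0.1-1]? none
          + ∑ i ∈ (Finset.Icc 1 K.length).filter (fun i => ∀ p ∈ M, p.1 ≠ i), c K[i-1]? none := by
      rw [hS2set, Finset.sum_insert hp0notmem]
    -- third sums: j is mapped, so j is not in the unmapped filter
    have hjnot : j ∉ (Finset.Icc 1 L.length).filter (fun k => ∀ p ∈ M, p.2 ≠ k) := by
      simp only [Finset.mem_filter, Finset.mem_Icc]
      rintro ⟨-, hQ⟩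
      exact hQ p0 hp0M hp0
    have hS3' : (∑ k ∈ (Finset.Icc 1 (L.length-1)).filter (fun k => ∀ q ∈ M', q.2 ≠ k),
          c none (L.eraseIdx (j-1))[k-1]?)
        = ∑ k ∈ (Finset.Icc 1 L.length).filter (fun k => ∀ p ∈ M, p.2 ≠ k), c none L[k-1]? := by
      rw [hS3, Finset.erase_eq_of_notMem hjnot]
    rw [hS1', hS2', hS3']
    have htri := htr (K[p0.1-1]?) (L[j-1]?) none
    rw [hp0]
    linarith
  · push_neg at hex
    have hfil : M.filter (fun p => p.2 = j) = ∅ :=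
      Finset.filter_eq_empty_iff.mpr fun {p} hp => hex p hp
    have hS1' : (∑ q ∈ M', c K[q.1-1]? (L.eraseIdx (j-1))[q.2-1]?)
        = ∑ p ∈ M, c K[p.1-1]? L[p.2-1]? := by
      rw [hS1, hkey (fun p => c K[p.1-1]? L[p.2-1]?),
        hkey2 (fun p => c K[p.1-1]? L[p.2-1]?), hfil, Finset.sum_empty]
      ring
    have hS2set : (Finset.Icc 1 K.length).filter (fun i => ∀ q ∈ M', q.1 ≠ i)
        = (Finset.Icc 1 K.length).filter (fun i => ∀ p ∈ M, p.1 ≠ i) := by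
      ext i
      simp only [Finset.mem_filter, Finset.mem_Icc]
      constructor
      · rintro ⟨hic, hP'⟩
        refine ⟨hic, fun p hpM hpi => ?_⟩
        rcases Nat.lt_or_ge p.2 j with hlt | hge
        · exact hP' p ((hmem p).mpr (Or.inl ⟨hpM, hlt⟩)) hpi
        · have hgt : j < p.2 := by
            have := hex p hpM
            omega
          exact hP' (p.1, p.2-1) ((hmem _).mpr (Or.inr ⟨p, hpM, hgt, rfl⟩)) hpi
      · rintro ⟨hic, hP⟩
        refine ⟨hic, fun q hq => ?_⟩
        rcases (hmem q).mp hq with ⟨hqM, _⟩ | ⟨p, hpM, _, rfl⟩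
        · exact hP q hqM
        · exact hP p hpM
    have hjmem : j ∈ (Finset.Icc 1 L.length).filter (fun k => ∀ p ∈ M, p.2 ≠ k) := by
      simp only [Finset.mem_filter, Finset.mem_Icc]
      exact ⟨⟨hj1, hj2⟩, hex⟩
    have hS3' : (∑ k ∈ (Finset.Icc 1 L.length).filter (fun k => ∀ p ∈ M, p.2 ≠ k),
          c none L[k-1]?)
        = c none L[j-1]?
          + ∑ k ∈ (Finset.Icc 1 (L.length-1)).filter (fun k => ∀ q ∈ M', q.2 ≠ k),
              c none (L.eraseIdx (j-1))[k-1]? := by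
      rw [hS3, ← Finset.add_sum_erase _ (fun k => c none L[k-1]?) hjmem]
    rw [hS1', hS2set]
    have h1 := hnn (none : Option α) (L[j-1]?)
    have h2 := hnn (L[j-1]?) (none : Option α)
    linarith


theorem Gcost_ins (c : Cost α) (K L : List α) (M : Finset (ℕ × ℕ))
    (hInv : InvM K.length L.length M) (pp : ℕ) (y : α)
    (hp1 : 1 ≤ pp) (hp2 : pp ≤ L.length + 1) :
    Gcost c K (L.insertIdx (pp-1) y)
        ((M.filter (fun p => p.2 < pp)) ∪
          ((M.filter (fun p => pp ≤ p.2)).image (fun p => (p.1, p.2 + 1))))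
      ≤ Gcost c K L M + c none (some y) := by
  obtain ⟨hbd, hi1, hi2⟩ := hInv
  set M' := (M.filter (fun p => p.2 < pp)) ∪
      ((M.filter (fun p => pp ≤ p.2)).image (fun p => (p.1, p.2 + 1))) with hM'
  have hmem : ∀ q : ℕ × ℕ, q ∈ M' ↔
      (q ∈ M ∧ q.2 < pp) ∨ (∃ p, p ∈ M ∧ pp ≤ p.2 ∧ q = (p.1, p.2 + 1)) := by
    intro q
    simp only [hM', Finset.mem_union, Finset.mem_filter, Finset.mem_image]
    constructor
    · rintro (⟨h1, h2⟩ | ⟨p, ⟨ha, hb⟩, h3⟩)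
      · exact Or.inl ⟨h1, h2⟩
      · exact Or.inr ⟨p, ha, hb, h3.symm⟩
    · rintro (⟨h1, h2⟩ | ⟨p, ha, hb, h3⟩)
      · exact Or.inl ⟨h1, h2⟩
      · exact Or.inr ⟨p, ⟨ha, hb⟩, h3.symm⟩
  have hlenL' : (L.insertIdx (pp-1) y).length = L.length + 1 :=
    by rw [List.length_insertIdx, if_pos (by omega)]
  have hget := fun k => aux_getElem?_insertIdx y (pp-1) L (by omega) k
  rw [Gcost, Gcost, hlenL']
  have hdisj : Disjoint (M.filter (fun p => p.2 < pp))
      ((M.filter (fun p => pp ≤ p.2)).image (fun p => (p.1, p.2 + 1))) := by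
    rw [Finset.disjoint_left]
    rintro q hq1 hq2
    simp only [Finset.mem_filter] at hq1
    simp only [Finset.mem_image, Finset.mem_filter] at hq2
    obtain ⟨p, ⟨hpM, hpj⟩, hq⟩ := hq2
    have hq2' : q.2 = p.2 + 1 := by rw [← hq]
    omega
  have hinj : ∀ p ∈ M.filter (fun p => pp ≤ p.2), ∀ q ∈ M.filter (fun p => pp ≤ p.2),
      (p.1, p.2 + 1) = (q.1, q.2 + 1) → p = q := by
    intro p hp q hq hpq
    simp only [Finset.mem_filter] at hp hq
    have h2 : p.2 + 1 = q.2 + 1 := congrArg Prod.snd hpq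
    exact hi2 p hp.1 q hq.1 (by omega)
  have hS1 : (∑ q ∈ M', c K[q.1-1]? (L.insertIdx (pp-1) y)[q.2-1]?) =
      ∑ p ∈ M, c K[p.1-1]? L[p.2-1]? := by
    rw [hM', Finset.sum_union hdisj, Finset.sum_image hinj]
    have e1 : (∑ p ∈ M.filter (fun p => p.2 < pp), c K[p.1-1]? (L.insertIdx (pp-1) y)[p.2-1]?)
        = ∑ p ∈ M.filter (fun p => p.2 < pp), c K[p.1-1]? L[p.2-1]? := by
      refine Finset.sum_congr rfl fun p hp => ?_
      simp only [Finset.mem_filter] at hp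
      have hb := hbd p hp.1
      rw [hget (p.2-1), if_pos (by omega)]
    have e2 : (∑ p ∈ M.filter (fun p => pp ≤ p.2),
          c K[(p.1, p.2+1).1-1]? (L.insertIdx (pp-1) y)[(p.1, p.2+1).2-1]?)
        = ∑ p ∈ M.filter (fun p => pp ≤ p.2), c K[p.1-1]? L[p.2-1]? := by
      refine Finset.sum_congr rfl fun p hp => ?_
      simp only [Finset.mem_filter] at hp
      have hb := hbd p hp.1
      show c K[p.1-1]? (L.insertIdx (pp-1) y)[p.2+1-1]? = _
      rw [hget (p.2+1-1), if_neg (by omega), if_neg (by omega)]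
      congr 2 <;> omega
    rw [e1, e2]
    have hfe : M.filter (fun p => pp ≤ p.2) = M.filter (fun p => ¬ p.2 < pp) := by
      ext q
      simp only [Finset.mem_filter]
      constructor <;> rintro ⟨h1, h2⟩ <;> exact ⟨h1, by omega⟩
    rw [hfe, Finset.sum_filter_add_sum_filter_not M (fun p => p.2 < pp)
      (fun p => c K[p.1-1]? L[p.2-1]?)]
  have hS2set : (Finset.Icc 1 K.length).filter (fun i => ∀ q ∈ M', q.1 ≠ i)
      = (Finset.Icc 1 K.length).filter (fun i => ∀ p ∈ M, p.1 ≠ i) := by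
    ext i
    simp only [Finset.mem_filter, Finset.mem_Icc]
    constructor
    · rintro ⟨hic, hP'⟩
      refine ⟨hic, fun p hpM hpi => ?_⟩
      rcases Nat.lt_or_ge p.2 pp with hlt | hge
      · exact hP' p ((hmem p).mpr (Or.inl ⟨hpM, hlt⟩)) hpi
      · exact hP' (p.1, p.2+1) ((hmem _).mpr (Or.inr ⟨p, hpM, hge, rfl⟩)) hpi
    · rintro ⟨hic, hP⟩
      refine ⟨hic, fun q hq => ?_⟩
      rcases (hmem q).mp hq with ⟨hqM, _⟩ | ⟨p, hpM, _, rfl⟩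
      · exact hP q hqM
      · exact hP p hpM
  have hS3set : (Finset.Icc 1 (L.length+1)).filter (fun k => ∀ q ∈ M', q.2 ≠ k)
      = insert pp (((Finset.Icc 1 L.length).filter (fun k => ∀ p ∈ M, p.2 ≠ k)).image
          (fun k => if k < pp then k else k + 1)) := by
    ext k'
    simp only [Finset.mem_insert, Finset.mem_image, Finset.mem_filter, Finset.mem_Icc]
    constructor
    · rintro ⟨⟨hk1, hk2⟩, hQ'⟩
      by_cases hkp : k' = pp
      · exact Or.inl hkp
      · rcases Nat.lt_or_ge k' pp with hlt | hge
        · refine Or.inr ⟨k', ⟨⟨by omega, by omega⟩, fun p hpM hcon => ?_⟩, by rw [if_pos hlt]⟩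
          exact hQ' p ((hmem p).mpr (Or.inl ⟨hpM, by omega⟩)) hcon
        · refine Or.inr ⟨k'-1, ⟨⟨by omega, by omega⟩, fun p hpM hcon => ?_⟩,
            by rw [if_neg (by omega)]; omega⟩
          exact hQ' (p.1, p.2+1) ((hmem _).mpr (Or.inr ⟨p, hpM, by omega, rfl⟩)) (by omega)
    · rintro (rfl | ⟨k, ⟨⟨hk1, hk2⟩, hQ⟩, rfl⟩)
      · refine ⟨⟨by omega, by omega⟩, fun q hq => ?_⟩
        rcases (hmem q).mp hq with ⟨hqM, hqlt⟩ | ⟨p, hpM, hpj, rfl⟩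
        · omega
        · show p.2 + 1 ≠ k'
          omega
      · split_ifs with hlt
        · refine ⟨⟨by omega, by omega⟩, fun q hq => ?_⟩
          rcases (hmem q).mp hq with ⟨hqM, hqlt⟩ | ⟨p, hpM, hpj, rfl⟩
          · exact hQ q hqM
          · show p.2 + 1 ≠ k
            omega
        · refine ⟨⟨by omega, by omega⟩, fun q hq => ?_⟩
          rcases (hmem q).mp hq with ⟨hqM, hqlt⟩ | ⟨p, hpM, hpj, rfl⟩
          · omega
          · show p.2 + 1 ≠ k + 1
            intro hcon
            exact hQ p hpM (by omega)
  have hppnot : pp ∉ ((Finset.Icc 1 L.length).filter (fun k => ∀ p ∈ M, p.2 ≠ k)).image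
      (fun k => if k < pp then k else k + 1) := by
    simp only [Finset.mem_image, Finset.mem_filter, Finset.mem_Icc]
    rintro ⟨k, ⟨⟨hk1, hk2⟩, hQ⟩, hcon⟩
    split_ifs at hcon <;> omega
  have hψinj : ∀ x ∈ (Finset.Icc 1 L.length).filter (fun k => ∀ p ∈ M, p.2 ≠ k),
      ∀ y' ∈ (Finset.Icc 1 L.length).filter (fun k => ∀ p ∈ M, p.2 ≠ k),
      (if x < pp then x else x + 1) = (if y' < pp then y' else y' + 1) → x = y' := by
    intro x hx y' hy' hxy
    split_ifs at hxy <;> omega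
  have hS3 : (∑ k ∈ (Finset.Icc 1 (L.length+1)).filter (fun k => ∀ q ∈ M', q.2 ≠ k),
        c none (L.insertIdx (pp-1) y)[k-1]?)
      = c none (some y)
        + ∑ k ∈ (Finset.Icc 1 L.length).filter (fun k => ∀ p ∈ M, p.2 ≠ k), c none L[k-1]? := by
    rw [hS3set, Finset.sum_insert hppnot, Finset.sum_image hψinj]
    congr 1
    · rw [hget (pp-1), if_neg (by omega), if_pos rfl]
    · refine Finset.sum_congr rfl fun k hk => ?_
      simp only [Finset.mem_filter, Finset.mem_Icc] at hk
      split_ifs with hlt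
      · rw [hget (k-1), if_pos (by omega)]
      · show c none (L.insertIdx (pp-1) y)[k+1-1]? = _
        rw [hget (k+1-1), if_neg (by omega), if_neg (by omega)]
        congr 2 <;> omega
  rw [hS1, hS2set, hS3]
  linarith

theorem InvM_del (m n : ℕ) (M : Finset (ℕ × ℕ)) (hInv : InvM m n M) (j : ℕ)
    (hj1 : 1 ≤ j) (hj2 : j ≤ n) :
    InvM m (n-1) ((M.filter (fun p => p.2 < j)) ∪
      ((M.filter (fun p => j < p.2)).image (fun p => (p.1, p.2 - 1)))) := by
  obtain ⟨hbd, hi1, hi2⟩ := hInv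
  have hmem : ∀ q : ℕ × ℕ, q ∈ (M.filter (fun p => p.2 < j)) ∪
      ((M.filter (fun p => j < p.2)).image (fun p => (p.1, p.2 - 1))) ↔
      (q ∈ M ∧ q.2 < j) ∨ (∃ p, p ∈ M ∧ j < p.2 ∧ q = (p.1, p.2 - 1)) := by
    intro q
    simp only [Finset.mem_union, Finset.mem_filter, Finset.mem_image]
    constructor
    · rintro (⟨h1, h2⟩ | ⟨p, ⟨ha, hb⟩, h3⟩)
      · exact Or.inl ⟨h1, h2⟩
      · exact Or.inr ⟨p, ha, hb, h3.symm⟩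
    · rintro (⟨h1, h2⟩ | ⟨p, ha, hb, h3⟩)
      · exact Or.inl ⟨h1, h2⟩
      · exact Or.inr ⟨p, ⟨ha, hb⟩, h3.symm⟩
  refine ⟨?_, ?_, ?_⟩
  · intro q hq
    rcases (hmem q).mp hq with ⟨hqM, hq2⟩ | ⟨p, hpM, hpj, rfl⟩
    · have := hbd q hqM
      exact ⟨this.1, this.2.1, this.2.2.1, by omega⟩
    · have := hbd p hpM
      exact ⟨this.1, this.2.1, by omega, by omega⟩
  · intro q hq q' hq' h1
    rcases (hmem q).mp hq with ⟨hqM, hq2⟩ | ⟨p, hpM, hpj, rfl⟩ <;>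
      rcases (hmem q').mp hq' with ⟨hq'M, hq'2⟩ | ⟨p', hp'M, hp'j, rfl⟩
    · exact hi1 q hqM q' hq'M h1
    · have heq := hi1 q hqM p' hp'M h1
      subst heq
      omega
    · have heq := hi1 p hpM q' hq'M h1
      subst heq
      omega
    · have heq := hi1 p hpM p' hp'M h1
      rw [heq]
  · intro q hq q' hq' h2
    rcases (hmem q).mp hq with ⟨hqM, hq2⟩ | ⟨p, hpM, hpj, rfl⟩ <;>
      rcases (hmem q').mp hq' with ⟨hq'M, hq'2⟩ | ⟨p', hp'M, hp'j, rfl⟩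
    · exact hi2 q hqM q' hq'M h2
    · simp only at h2
      have hb := hbd p' hp'M
      omega
    · simp only at h2
      have hb := hbd q' hq'M
      omega
    · simp only at h2
      have hb := hbd p hpM
      have hb' := hbd p' hp'M
      have heq := hi2 p hpM p' hp'M (by omega)
      rw [heq]

theorem InvM_ins (m n : ℕ) (M : Finset (ℕ × ℕ)) (hInv : InvM m n M) (pp : ℕ) :
    InvM m (n+1) ((M.filter (fun p => p.2 < pp)) ∪
      ((M.filter (fun p => pp ≤ p.2)).image (fun p => (p.1, p.2 + 1)))) := by
  obtain ⟨hbd, hi1, hi2⟩ := hInv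
  have hmem : ∀ q : ℕ × ℕ, q ∈ (M.filter (fun p => p.2 < pp)) ∪
      ((M.filter (fun p => pp ≤ p.2)).image (fun p => (p.1, p.2 + 1))) ↔
      (q ∈ M ∧ q.2 < pp) ∨ (∃ p, p ∈ M ∧ pp ≤ p.2 ∧ q = (p.1, p.2 + 1)) := by
    intro q
    simp only [Finset.mem_union, Finset.mem_filter, Finset.mem_image]
    constructor
    · rintro (⟨h1, h2⟩ | ⟨p, ⟨ha, hb⟩, h3⟩)
      · exact Or.inl ⟨h1, h2⟩
      · exact Or.inr ⟨p, ha, hb, h3.symm⟩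
    · rintro (⟨h1, h2⟩ | ⟨p, ha, hb, h3⟩)
      · exact Or.inl ⟨h1, h2⟩
      · exact Or.inr ⟨p, ⟨ha, hb⟩, h3.symm⟩
  refine ⟨?_, ?_, ?_⟩
  · intro q hq
    rcases (hmem q).mp hq with ⟨hqM, hq2⟩ | ⟨p, hpM, hpj, rfl⟩
    · have := hbd q hqM
      exact ⟨this.1, this.2.1, this.2.2.1, by omega⟩
    · have := hbd p hpM
      exact ⟨this.1, this.2.1, by omega, by omega⟩
  · intro q hq q' hq' h1
    rcases (hmem q).mp hq with ⟨hqM, hq2⟩ | ⟨p, hpM, hpj, rfl⟩ <;>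
      rcases (hmem q').mp hq' with ⟨hq'M, hq'2⟩ | ⟨p', hp'M, hp'j, rfl⟩
    · exact hi1 q hqM q' hq'M h1
    · have heq := hi1 q hqM p' hp'M h1
      subst heq
      omega
    · have heq := hi1 p hpM q' hq'M h1
      subst heq
      omega
    · have heq := hi1 p hpM p' hp'M h1
      rw [heq]
  · intro q hq q' hq' h2
    rcases (hmem q).mp hq with ⟨hqM, hq2⟩ | ⟨p, hpM, hpj, rfl⟩ <;>
      rcases (hmem q').mp hq' with ⟨hq'M, hq'2⟩ | ⟨p', hp'M, hp'j, rfl⟩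
    · exact hi2 q hqM q' hq'M h2
    · simp only at h2
      omega
    · simp only at h2
      omega
    · simp only at h2
      have heq := hi2 p hpM p' hp'M (by omega)
      rw [heq]


theorem stepMap_fixed {F : Forest α} {e : Edit α} {M : Finset (ℕ × ℕ)} (h : e.apply F = F) :
    stepMap F e M = M := by
  rw [stepMap.eq_def, if_pos h]

theorem stepMap_rep {F : Forest α} {i : ℕ} {y : α} {M : Finset (ℕ × ℕ)}
    (h : (Edit.rep i y).apply F ≠ F) : stepMap F (.rep i y) M = M := by
  rw [stepMap.eq_def, if_neg h]

theorem stepMap_del {F : Forest α} {i : ℕ} {M : Finset (ℕ × ℕ)}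
    (h : (Edit.del i).apply F ≠ F) :
    stepMap F (.del i) M = (M.filter (fun p => p.2 < i)) ∪
      ((M.filter (fun p => i < p.2)).image (fun p => (p.1, p.2 - 1))) := by
  rw [stepMap.eq_def, if_neg h]

theorem stepMap_ins {F : Forest α} {i : ℕ} {y : α} {l r : ℕ} {M : Finset (ℕ × ℕ)}
    (h : (Edit.ins i y l r).apply F ≠ F) :
    stepMap F (.ins i y l r) M = (M.filter (fun p => p.2 < insPos F i l)) ∪
      ((M.filter (fun p => insPos F i l ≤ p.2)).image (fun p => (p.1, p.2 + 1))) := by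
  rw [stepMap.eq_def, if_neg h]

theorem editCost_fixed (c : Cost α) {F : Forest α} {e : Edit α} (h : e.apply F = F) :
    editCost c e F = 0 := by
  rw [editCost.eq_def, if_pos h]

theorem editCost_rep (c : Cost α) {F : Forest α} {i : ℕ} {y : α}
    (h : (Edit.rep i y).apply F ≠ F) : editCost c (.rep i y) F = c (labelAt F i) (some y) := by
  rw [editCost.eq_def, if_neg h]

theorem editCost_del (c : Cost α) {F : Forest α} {i : ℕ}
    (h : (Edit.del i).apply F ≠ F) : editCost c (.del i) F = c (labelAt F i) none := by
  rw [editCost.eq_def, if_neg h]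

theorem editCost_ins (c : Cost α) {F : Forest α} {i : ℕ} {y : α} {l r : ℕ}
    (h : (Edit.ins i y l r).apply F ≠ F) : editCost c (.ins i y l r) F = c none (some y) := by
  rw [editCost.eq_def, if_neg h]

theorem step_le (c : Cost α) (hnn : Nonneg c) (htr : Triangle c) (F H : Forest α)
    (e : Edit α) (M : Finset (ℕ × ℕ))
    (hInv : InvM (labels F).length (labels H).length M) :
    Gcost c (labels F) (labels (e.apply H)) (stepMap H e M)
      ≤ Gcost c (labels F) (labels H) M + editCost c e H
    ∧ InvM (labels F).length (labels (e.apply H)).length (stepMap H e M) := by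
  by_cases hch : e.apply H = H
  · rw [stepMap_fixed hch, editCost_fixed c hch, hch]
    exact ⟨by linarith, hInv⟩
  · cases e with
    | rep i y =>
      have hrange : 1 ≤ i ∧ i ≤ fsize H := by
        by_contra hcon
        exact hch (applyRep_out y i H (by omega))
      obtain ⟨h1, h2⟩ := hrange
      have hlab : labels (applyRep y i H) = (labels H).set (i-1) y := applyRep_labels y i H h1 h2
      have happ : (Edit.rep i y).apply H = applyRep y i H := rfl
      constructor
      · rw [stepMap_rep hch, editCost_rep c hch, happ, hlab, labelAt_eq]
        exact Gcost_rep c htr _ _ M hInv i y h1 (by rw [length_labels]; exact h2)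
      · rw [stepMap_rep hch, happ, hlab, List.length_set]
        exact hInv
    | del i =>
      have hrange : 1 ≤ i ∧ i ≤ fsize H := by
        by_contra hcon
        exact hch (applyDel_out i H (by omega))
      obtain ⟨h1, h2⟩ := hrange
      have hlab : labels (applyDel i H) = (labels H).eraseIdx (i-1) := applyDel_labels i H h1 h2
      have happ : (Edit.del i).apply H = applyDel i H := rfl
      have h2' : i ≤ (labels H).length := by rw [length_labels]; exact h2
      constructor
      · rw [stepMap_del hch, editCost_del c hch, happ, hlab, labelAt_eq]
        exact Gcost_del c hnn htr _ _ M hInv i h1 h2'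
      · rw [stepMap_del hch, happ, hlab, List.length_eraseIdx, if_pos (by omega)]
        exact InvM_del _ _ M hInv i h1 h2'
    | ins i y l r =>
      have happ : (Edit.ins i y l r).apply H = applyIns y l r i H := rfl
      have hne : applyIns y l r i H ≠ H := by rw [← happ]; exact hch
      obtain ⟨hp1, hp2, hlab⟩ := applyIns_labels y l r i H hne
      have hp2' : insPos H i l ≤ (labels H).length + 1 := by rw [length_labels]; exact hp2
      constructor
      · rw [stepMap_ins hch, editCost_ins c hch, happ, hlab]
        exact Gcost_ins c _ _ M hInv (insPos H i l) y hp1 hp2'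
      · rw [stepMap_ins hch, happ, hlab, List.length_insertIdx, if_pos (by omega)]
        exact InvM_ins _ _ M hInv (insPos H i l)

theorem fold_le (c : Cost α) (hnn : Nonneg c) (htr : Triangle c) (F : Forest α) :
    ∀ (δ : List (Edit α)) (H : Forest α) (M : Finset (ℕ × ℕ)),
      InvM (labels F).length (labels H).length M →
      Gcost c (labels F) (labels (applyScript δ H))
          ((δ.foldl (fun st e => (e.apply st.1, stepMap st.1 e st.2)) (H, M)).2)
        ≤ Gcost c (labels F) (labels H) M + scriptCost c δ H
  | [], H, M, hInv => by
      rw [applyScript, List.foldl_nil, List.foldl_nil, scriptCost]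
      exact le_of_eq (by ring)
  | e :: δ, H, M, hInv => by
      have hstep := step_le c hnn htr F H e M hInv
      have ih := fold_le c hnn htr F δ (e.apply H) (stepMap H e M) hstep.2
      have happ : applyScript (e :: δ) H = applyScript δ (e.apply H) := by
        rw [applyScript, applyScript, List.foldl_cons]
      have hfold : ((e :: δ).foldl (fun st e => (e.apply st.1, stepMap st.1 e st.2)) (H, M))
          = (δ.foldl (fun st e => (e.apply st.1, stepMap st.1 e st.2))
              (e.apply H, stepMap H e M)) := by
        rw [List.foldl_cons]
      rw [happ, hfold, scriptCost]
      have h1 := hstep.1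
      linarith

theorem InvM_init (F : Forest α) :
    InvM (labels F).length (labels F).length
      ((Finset.Icc 1 (fsize F)).image (fun i => (i, i))) := by
  refine ⟨?_, ?_, ?_⟩
  · intro p hp
    simp only [Finset.mem_image, Finset.mem_Icc] at hp
    obtain ⟨i, ⟨hi1, hi2⟩, rfl⟩ := hp
    rw [length_labels]
    exact ⟨hi1, hi2, hi1, hi2⟩
  · intro p hp q hq h
    simp only [Finset.mem_image, Finset.mem_Icc] at hp hq
    obtain ⟨i, -, rfl⟩ := hp
    obtain ⟨i', -, rfl⟩ := hq
    simp only at h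
    rw [h]
  · intro p hp q hq h
    simp only [Finset.mem_image, Finset.mem_Icc] at hp hq
    obtain ⟨i, -, rfl⟩ := hp
    obtain ⟨i', -, rfl⟩ := hq
    simp only at h
    rw [h]

theorem filter_unmapped1_empty (M : Finset (ℕ × ℕ)) (n : ℕ)
    (h : ∀ i, 1 ≤ i → i ≤ n → ∃ p ∈ M, p.1 = i) :
    (Finset.Icc 1 n).filter (fun i => ∀ p ∈ M, p.1 ≠ i) = ∅ := by
  refine Finset.filter_eq_empty_iff.mpr ?_
  intro i hi
  simp only [Finset.mem_Icc] at hi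
  push_neg
  exact h i hi.1 hi.2

theorem filter_unmapped2_empty (M : Finset (ℕ × ℕ)) (n : ℕ)
    (h : ∀ j, 1 ≤ j → j ≤ n → ∃ p ∈ M, p.2 = j) :
    (Finset.Icc 1 n).filter (fun j => ∀ p ∈ M, p.2 ≠ j) = ∅ := by
  refine Finset.filter_eq_empty_iff.mpr ?_
  intro j hj
  simp only [Finset.mem_Icc] at hj
  push_neg
  exact h j hj.1 hj.2

theorem Gcost_init (c : Cost α) (hse : SelfEq c) (F : Forest α) :
    Gcost c (labels F) (labels F) ((Finset.Icc 1 (fsize F)).image (fun i => (i, i))) = 0 := by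
  rw [Gcost]
  have h1 : (∑ p ∈ (Finset.Icc 1 (fsize F)).image (fun i => (i, i)),
      c (labels F)[p.1-1]? (labels F)[p.2-1]?) = 0 := by
    refine Finset.sum_eq_zero fun p hp => ?_
    simp only [Finset.mem_image] at hp
    obtain ⟨i, -, rfl⟩ := hp
    exact hse _
  have hmm : ∀ i : ℕ, 1 ≤ i → i ≤ (labels F).length →
      ∃ p ∈ (Finset.Icc 1 (fsize F)).image (fun i => (i, i)), p = (i, i) := by
    intro i hi1 hi2
    rw [length_labels] at hi2
    refine ⟨(i, i), ?_, rfl⟩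
    simp only [Finset.mem_image, Finset.mem_Icc]
    exact ⟨i, ⟨hi1, hi2⟩, rfl⟩
  rw [h1, filter_unmapped1_empty _ _ (fun i h1 h2 => by
      obtain ⟨p, hp, rfl⟩ := hmm i h1 h2
      exact ⟨(i, i), hp, rfl⟩),
    filter_unmapped2_empty _ _ (fun j h1 h2 => by
      obtain ⟨p, hp, rfl⟩ := hmm j h1 h2
      exact ⟨(j, j), hp, rfl⟩),
    Finset.sum_empty]
  ring

end CostLemmas

/-- If the cost function `c` is non-negative, self-equal and conforms
to the triangular inequality, then for every edit script `δ̄` with `δ̄(X) = Y`, the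
corresponding tree mapping `M_δ̄` is at most as expensive as the script:
`c(M_δ̄, X, Y) ≤ c(δ̄, X)`. -/
theorem mapOfScript_cost_le {α : Type} (c : Cost α) (hnn : Nonneg c) (hse : SelfEq c)
    (htr : Triangle c) (F G : Forest α) (δ : List (Edit α)) (h : applyScript δ F = G) :
    mapCost c F G (mapOfScript δ F) ≤ scriptCost c δ F := by
  subst h
  rw [mapCost_eq_Gcost, mapOfScript]
  have hmain := fold_le c hnn htr F δ F
    ((Finset.Icc 1 (fsize F)).image (fun i => (i, i))) (InvM_init F)
  rw [Gcost_init c hse F] at hmain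
  linarith

end TED
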